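/- Let α, β be negative rational numbers, H = (α,β/ℚ) the corresponding definite rational quaternion algebra with orthogonal involution ♯ given by (w + xi + yj + tk)^♯ = w + xi + yj − tk, and let O be a ♯-order of H. Let ι : H → ℍ be a ℚ-algebra homomorphism into the Hamilton quaternions satisfying ι(♯(x)) = (ι(x))^♯ for all x ∈ H. Let M = [[a,b],[c,d]] be a 2×2 matrix with entries in O satisfying M·σ̂(M) = σ̂(M)·M = 1. Then for every Hamilton quaternion z with π_k(z) > 1: ι(c)·z + ι(d) ≠ 0 and π_k((ι(a)·z + ι(b))·(ι(c)·z + ι(d))⁻¹) ≤ π_k(z), with equality if and only if c = 0 (i.e., if and only if M stabilizes ∞). -/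

import Mathlib

/-- The orthogonal involution `♯` on a quaternion algebra negating the `k`-component. -/
def kSharp {R : Type*} [CommRing R] {c₁ c₂ : R} (q : QuaternionAlgebra R c₁ 0 c₂) :
    QuaternionAlgebra R c₁ 0 c₂ := ⟨q.re, q.imI, q.imJ, -q.imK⟩

/-- The twisted adjugate involution `σ̂` on 2×2 matrices over a ring with involution. -/
def hatSigma {A : Type*} [Ring A] (σ : A → A) (M : Matrix (Fin 2) (Fin 2) A) :
    Matrix (Fin 2) (Fin 2) A :=
  !![σ (M 1 1), -σ (M 0 1); -σ (M 1 0), σ (M 0 0)]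

open Quaternion Polynomial

noncomputable section

lemma kSharpQ_zero {R : Type*} [CommRing R] {c₁ c₂ : R} :
    kSharp (0 : QuaternionAlgebra R c₁ 0 c₂) = 0 := by
  ext <;> simp [kSharp]

/-! ### The sharp involution on the Hamilton quaternions -/

def sharpH (q : Quaternion ℝ) : Quaternion ℝ := kSharp q

lemma sharpH_eq (q : Quaternion ℝ) : kSharp q = sharpH q := rfl

@[simp] lemma sharpH_re (q : Quaternion ℝ) : (sharpH q).re = q.re := rfl
@[simp] lemma sharpH_imI (q : Quaternion ℝ) : (sharpH q).imI = q.imI := rfl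
@[simp] lemma sharpH_imJ (q : Quaternion ℝ) : (sharpH q).imJ = q.imJ := rfl
@[simp] lemma sharpH_imK (q : Quaternion ℝ) : (sharpH q).imK = -q.imK := rfl

lemma sharpH_mul (p q : Quaternion ℝ) : sharpH (p * q) = sharpH q * sharpH p := by
  ext <;> simp [Quaternion.re_mul, Quaternion.imI_mul, Quaternion.imJ_mul,
    Quaternion.imK_mul] <;> ring

@[simp] lemma sharpH_one : sharpH (1 : Quaternion ℝ) = 1 := by ext <;> simp
@[simp] lemma sharpH_zero : sharpH (0 : Quaternion ℝ) = 0 := by ext <;> simp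

lemma sharpH_add (p q : Quaternion ℝ) : sharpH (p + q) = sharpH p + sharpH q := by
  ext <;> simp <;> ring

lemma sharpH_eq_zero {q : Quaternion ℝ} (h : sharpH q = 0) : q = 0 := by
  have h1 := congrArg QuaternionAlgebra.re h
  have h2 := congrArg QuaternionAlgebra.imI h
  have h3 := congrArg QuaternionAlgebra.imJ h
  have h4 := congrArg QuaternionAlgebra.imK h
  simp at h1 h2 h3 h4
  ext <;> simp [h1, h2, h3, h4]

def kH : Quaternion ℝ := ⟨0, 0, 0, 1⟩

lemma sub_sharpH (q : Quaternion ℝ) : q - sharpH q = (2 * q.imK) • kH := by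
  ext <;> simp [Quaternion.re_smul] <;> simp [kH] <;> ring

lemma sharpH_mul_k (q : Quaternion ℝ) : sharpH q * kH = kH * star q := by
  ext <;> simp [Quaternion.re_mul, Quaternion.imI_mul, Quaternion.imJ_mul,
    Quaternion.imK_mul] <;> simp [kH] <;> ring

lemma sharpH_inv (q : Quaternion ℝ) : sharpH q⁻¹ = (sharpH q)⁻¹ := by
  rcases eq_or_ne q 0 with rfl | hq
  · simp
  · refine eq_inv_of_mul_eq_one_left ?_
    rw [← sharpH_mul, mul_inv_cancel₀ hq, sharpH_one]

lemma imK_eq_zero_of_sharpH_eq (q : Quaternion ℝ) (h : sharpH q = q) : q.imK = 0 := by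
  have := congrArg QuaternionAlgebra.imK h
  simp at this
  linarith

lemma k_mul_star_mul (v : Quaternion ℝ) : kH * (star v * v) = Quaternion.normSq v • kH := by
  rw [Quaternion.star_mul_self]
  ext <;> simp [Quaternion.re_mul, Quaternion.imI_mul, Quaternion.imJ_mul,
    Quaternion.imK_mul] <;> simp [kH]

/-- Main transformation identity for the height function. -/
lemma imK_transform (A B C D z : Quaternion ℝ)
    (h1 : sharpH D * A - sharpH B * C = 1)
    (h2 : sharpH D * B - sharpH B * D = 0)
    (h3 : -(sharpH C * A) + sharpH A * C = 0)
    (h4 : -(sharpH C * B) + sharpH A * D = 1)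
    (hv : C * z + D ≠ 0) :
    ((A * z + B) * (C * z + D)⁻¹).imK * Quaternion.normSq (C * z + D) = z.imK := by
  set u := A * z + B with hu
  set v := C * z + D with hvdef
  set w := u * v⁻¹ with hw
  have huw : u = w * v := by rw [hw, mul_assoc, inv_mul_cancel₀ hv, mul_one]
  have key : sharpH v * u - sharpH u * v = z - sharpH z := by
    rw [hu, hvdef, sharpH_add, sharpH_add, sharpH_mul, sharpH_mul]
    have expand : (sharpH z * sharpH C + sharpH D) * (A * z + B) -
        (sharpH z * sharpH A + sharpH B) * (C * z + D) =
        sharpH z * (-(sharpH C * A) + sharpH A * C) * (-z)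
          + (sharpH D * A - sharpH B * C) * z
          - sharpH z * (-(sharpH C * B) + sharpH A * D) + (sharpH D * B - sharpH B * D) := by
      noncomm_ring
    rw [expand, h1, h2, h3, h4]
    noncomm_ring
  have lhs : sharpH v * (w - sharpH w) * v = z - sharpH z := by
    have e1 : sharpH v * (w - sharpH w) * v
        = sharpH v * (w * v) - (sharpH v * sharpH w) * v := by noncomm_ring
    rw [e1, ← sharpH_mul, ← huw, key]
  rw [sub_sharpH] at lhs
  have lhs2 : (2 * w.imK) • (sharpH v * kH * v) = z - sharpH z := by
    rw [← lhs, Algebra.mul_smul_comm, Algebra.smul_mul_assoc]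
  rw [sharpH_mul_k, mul_assoc, k_mul_star_mul, smul_smul, sub_sharpH] at lhs2
  have himk := congrArg QuaternionAlgebra.imK lhs2
  rw [Quaternion.imK_smul, Quaternion.imK_smul] at himk
  simp only [kH, smul_eq_mul] at himk
  nlinarith [himk]

lemma normSq_ge_imK_sq (q : Quaternion ℝ) : q.imK ^ 2 ≤ Quaternion.normSq q := by
  rw [Quaternion.normSq_def']
  nlinarith [sq_nonneg q.re, sq_nonneg q.imI, sq_nonneg q.imJ]

lemma normSq_sharpH (q : Quaternion ℝ) : Quaternion.normSq (sharpH q) = Quaternion.normSq q := by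
  simp [Quaternion.normSq_def']

/-! ### The rational quaternion algebra side -/

variable {α β : ℚ}

/-- The reduced norm. -/
def Nq (x : QuaternionAlgebra ℚ α 0 β) : ℚ :=
  x.re ^ 2 - α * x.imI ^ 2 - β * x.imJ ^ 2 + α * β * x.imK ^ 2

lemma mul_star_self (x : QuaternionAlgebra ℚ α 0 β) :
    x * star x = (Nq x : QuaternionAlgebra ℚ α 0 β) := by
  ext <;> simp only [Nq, QuaternionAlgebra.re_coe, QuaternionAlgebra.imI_coe,
    QuaternionAlgebra.imJ_coe, QuaternionAlgebra.imK_coe,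
    QuaternionAlgebra.re_mul, QuaternionAlgebra.imI_mul,
    QuaternionAlgebra.imJ_mul, QuaternionAlgebra.imK_mul,
    QuaternionAlgebra.re_star, QuaternionAlgebra.imI_star,
    QuaternionAlgebra.imJ_star, QuaternionAlgebra.imK_star] <;> ring

lemma Nq_pos (hα : α < 0) (hβ : β < 0) {x : QuaternionAlgebra ℚ α 0 β} (hx : x ≠ 0) :
    0 < Nq x := by
  have h : x.re ≠ 0 ∨ x.imI ≠ 0 ∨ x.imJ ≠ 0 ∨ x.imK ≠ 0 := by
    by_contra h
    push_neg at h
    exact hx (by ext <;> simp [h.1, h.2.1, h.2.2.1, h.2.2.2])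
  have hab : 0 < α * β := mul_pos_of_neg_of_neg hα hβ
  have h1 : 0 ≤ x.re ^ 2 := sq_nonneg _
  have h2 : 0 ≤ -α * x.imI ^ 2 := by nlinarith [sq_nonneg x.imI]
  have h3 : 0 ≤ -β * x.imJ ^ 2 := by nlinarith [sq_nonneg x.imJ]
  have h4 : 0 ≤ α * β * x.imK ^ 2 := by nlinarith [sq_nonneg x.imK]
  rcases h with h | h | h | h
  · have : 0 < x.re ^ 2 := by positivity
    simp only [Nq]; nlinarith
  · have : 0 < x.imI ^ 2 := by positivity
    simp only [Nq]; nlinarith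
  · have : 0 < x.imJ ^ 2 := by positivity
    simp only [Nq]; nlinarith
  · have : 0 < x.imK ^ 2 := by positivity
    simp only [Nq]; nlinarith

/-- The quadratic polynomial killed by `x`. -/
def Pq (x : QuaternionAlgebra ℚ α 0 β) : ℚ[X] :=
  X ^ 2 + (C (-(2 * x.re)) * X + C (Nq x))

lemma Pq_monic (x : QuaternionAlgebra ℚ α 0 β) : (Pq x).Monic :=
  Polynomial.monic_X_pow_add ((Polynomial.degree_linear_le).trans_lt (by decide))

lemma Pq_natDegree (x : QuaternionAlgebra ℚ α 0 β) : (Pq x).natDegree = 2 := by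
  unfold Pq
  compute_degree!

lemma Pq_coeff_zero (x : QuaternionAlgebra ℚ α 0 β) : (Pq x).coeff 0 = Nq x := by
  simp [Pq, coeff_X, coeff_one]

lemma Pq_aeval (x : QuaternionAlgebra ℚ α 0 β) : aeval x (Pq x) = 0 := by
  simp only [Pq, map_add, map_mul, map_pow, aeval_X, aeval_C, map_neg,
    QuaternionAlgebra.coe_algebraMap]
  ext <;> simp only [Nq, pow_two, QuaternionAlgebra.re_coe, QuaternionAlgebra.imI_coe,
    QuaternionAlgebra.imJ_coe, QuaternionAlgebra.imK_coe,
    QuaternionAlgebra.re_mul, QuaternionAlgebra.imI_mul,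
    QuaternionAlgebra.imJ_mul, QuaternionAlgebra.imK_mul,
    QuaternionAlgebra.re_add, QuaternionAlgebra.imI_add, QuaternionAlgebra.imJ_add,
    QuaternionAlgebra.imK_add, QuaternionAlgebra.re_neg, QuaternionAlgebra.imI_neg,
    QuaternionAlgebra.imJ_neg, QuaternionAlgebra.imK_neg, QuaternionAlgebra.re_zero,
    QuaternionAlgebra.imI_zero, QuaternionAlgebra.imJ_zero, QuaternionAlgebra.imK_zero] <;> ring

/-- If the element is not rational, its quadratic polynomial has no rational root. -/
lemma Pq_roots (hα : α < 0) (hβ : β < 0) (x : QuaternionAlgebra ℚ α 0 β)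
    (him : ¬(x.imI = 0 ∧ x.imJ = 0 ∧ x.imK = 0)) : (Pq x).roots = 0 := by
  rw [Multiset.eq_zero_iff_forall_notMem]
  intro r hr
  rw [mem_roots ((Pq x).ne_zero_of_natDegree_gt (n := 0) (by rw [Pq_natDegree]; norm_num)),
    IsRoot.def] at hr
  have heval : r ^ 2 - 2 * x.re * r + Nq x = 0 := by
    have := hr
    simp [Pq, eval_add, eval_mul, eval_pow] at this
    linarith
  have hdisc : x.re ^ 2 - Nq x < 0 := by
    have e : x.re ^ 2 - Nq x = α * x.imI ^ 2 + β * x.imJ ^ 2 - α * β * x.imK ^ 2 := by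
      simp [Nq]; ring
    have hab : 0 < α * β := mul_pos_of_neg_of_neg hα hβ
    have h2 : α * x.imI ^ 2 ≤ 0 := by nlinarith [sq_nonneg x.imI]
    have h3 : β * x.imJ ^ 2 ≤ 0 := by nlinarith [sq_nonneg x.imJ]
    have h4 : -(α * β) * x.imK ^ 2 ≤ 0 := by nlinarith [sq_nonneg x.imK, hab]
    have h5 : x.imI ≠ 0 ∨ x.imJ ≠ 0 ∨ x.imK ≠ 0 := by tauto
    rcases h5 with h | h | h
    · have : 0 < x.imI ^ 2 := by positivity
      nlinarith
    · have : 0 < x.imJ ^ 2 := by positivity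
      nlinarith
    · have : 0 < x.imK ^ 2 := by positivity
      nlinarith
  nlinarith [sq_nonneg (r - x.re)]

lemma Pq_irreducible (hα : α < 0) (hβ : β < 0) (x : QuaternionAlgebra ℚ α 0 β)
    (him : ¬(x.imI = 0 ∧ x.imJ = 0 ∧ x.imK = 0)) : Irreducible (Pq x) := by
  rw [(Pq_monic x).irreducible_iff_roots_eq_zero_of_degree_le_three
    (by rw [Pq_natDegree]) (by rw [Pq_natDegree]; norm_num)]
  exact Pq_roots hα hβ x him

set_option maxHeartbeats 1000000 in
/-- The reduced norm of an integral element is an integer. -/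
lemma Nq_int (hα : α < 0) (hβ : β < 0) (x : QuaternionAlgebra ℚ α 0 β)
    (hint : IsIntegral ℤ x) : ∃ m : ℤ, (m : ℚ) = Nq x := by
  by_cases him : x.imI = 0 ∧ x.imJ = 0 ∧ x.imK = 0
  · -- `x` is a rational scalar
    have hx : x = (x.re : QuaternionAlgebra ℚ α 0 β) := by
      ext <;> simp [him.1, him.2.1, him.2.2]
    obtain ⟨p, pm, hp⟩ := hint
    have hre : IsIntegral ℤ x.re := by
      refine ⟨p, pm, ?_⟩
      have hinj : Function.Injective (algebraMap ℚ (QuaternionAlgebra ℚ α 0 β)) :=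
        (algebraMap ℚ (QuaternionAlgebra ℚ α 0 β)).injective
      apply hinj
      rw [map_zero, Polynomial.hom_eval₂,
        show (algebraMap ℚ (QuaternionAlgebra ℚ α 0 β)).comp (algebraMap ℤ ℚ)
          = algebraMap ℤ (QuaternionAlgebra ℚ α 0 β) from Subsingleton.elim _ _,
        show (algebraMap ℚ (QuaternionAlgebra ℚ α 0 β)) x.re = x by
          rw [QuaternionAlgebra.coe_algebraMap]; exact hx.symm]
      exact hp
    obtain ⟨m, hm⟩ := IsIntegrallyClosed.isIntegral_iff.mp hre
    refine ⟨m ^ 2, ?_⟩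
    have hm' : (m : ℚ) = x.re := by rwa [eq_intCast] at hm
    simp only [Nq, him.1, him.2.1, him.2.2]
    push_cast
    rw [hm']
    ring
  · -- `x` generates a quadratic field
    have hirr : Irreducible (Pq x) := Pq_irreducible hα hβ x him
    haveI : Fact (Irreducible (Pq x)) := ⟨hirr⟩
    obtain ⟨p, pm, hp⟩ := hint
    set pQ : ℚ[X] := p.map (algebraMap ℤ ℚ) with hpQ
    have haevalpQ : aeval x pQ = 0 := by
      rw [aeval_def, hpQ, Polynomial.eval₂_map,
        show (algebraMap ℚ (QuaternionAlgebra ℚ α 0 β)).comp (algebraMap ℤ ℚ)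
          = algebraMap ℤ (QuaternionAlgebra ℚ α 0 β) from Subsingleton.elim _ _]
      exact hp
    have hdvd : Pq x ∣ pQ := by
      by_contra hdvd
      obtain ⟨u, v, huv⟩ := (hirr.coprime_iff_not_dvd).mpr hdvd
      have h0 := congrArg (aeval x) huv
      rw [map_add, map_mul, map_mul, Pq_aeval x, haevalpQ, mul_zero, mul_zero, add_zero,
        map_one] at h0
      exact one_ne_zero h0.symm
    have hroot : IsIntegral ℤ (AdjoinRoot.root (Pq x)) := by
      refine ⟨p, pm, ?_⟩
      rw [Polynomial.eval₂_eq_eval_map,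
        show (p.map (algebraMap ℤ (AdjoinRoot (Pq x))))
          = pQ.map (algebraMap ℚ (AdjoinRoot (Pq x))) by
            rw [hpQ, Polynomial.map_map, Subsingleton.elim
              ((algebraMap ℚ (AdjoinRoot (Pq x))).comp (algebraMap ℤ ℚ))
              (algebraMap ℤ (AdjoinRoot (Pq x)))],
        ← Polynomial.eval₂_eq_eval_map, ← aeval_def]
      erw [AdjoinRoot.aeval_eq (f := Pq x), AdjoinRoot.mk_eq_zero]
      exact hdvd
    have hmin : minpoly ℚ (AdjoinRoot.root (Pq x)) = Pq x := by
      erw [AdjoinRoot.minpoly_root (K := ℚ) (Pq_monic x).ne_zero, (Pq_monic x).leadingCoeff]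
      simp
    have heq := minpoly.isIntegrallyClosed_eq_field_fractions' ℚ hroot
    rw [hmin] at heq
    refine ⟨(minpoly ℤ (AdjoinRoot.root (Pq x))).coeff 0, ?_⟩
    have := congrArg (fun q => Polynomial.coeff q 0) heq
    simp only [Polynomial.coeff_map] at this
    rw [Pq_coeff_zero] at this
    exact_mod_cast this.symm


/-! ### Transfer of the norm along the embedding -/

lemma re_sq_real (q : Quaternion ℝ) (r : ℝ) (hr : r < 0)
    (h : q * q = ((r : ℝ) : Quaternion ℝ)) : q.re = 0 := by
  have h0 := congrArg QuaternionAlgebra.re h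
  have h1 := congrArg QuaternionAlgebra.imI h
  have h2 := congrArg QuaternionAlgebra.imJ h
  have h3 := congrArg QuaternionAlgebra.imK h
  simp only [Quaternion.re_mul, Quaternion.imI_mul, Quaternion.imJ_mul, Quaternion.imK_mul,
    Quaternion.re_coe, Quaternion.imI_coe, Quaternion.imJ_coe, Quaternion.imK_coe] at h0 h1 h2 h3
  by_contra hre
  have hI : q.imI = 0 := by
    have : 2 * q.re * q.imI = 0 := by linarith
    rcases mul_eq_zero.mp this with h | h
    · rcases mul_eq_zero.mp h with h | h
      · norm_num at h
      · exact absurd h hre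
    · exact h
  have hJ : q.imJ = 0 := by
    have : 2 * q.re * q.imJ = 0 := by linarith
    rcases mul_eq_zero.mp this with h | h
    · rcases mul_eq_zero.mp h with h | h
      · norm_num at h
      · exact absurd h hre
    · exact h
  have hK : q.imK = 0 := by
    have : 2 * q.re * q.imK = 0 := by linarith
    rcases mul_eq_zero.mp this with h | h
    · rcases mul_eq_zero.mp h with h | h
      · norm_num at h
      · exact absurd h hre
    · exact h
  rw [hI, hJ, hK] at h0
  nlinarith [sq_nonneg q.re]

def iQ (α β : ℚ) : QuaternionAlgebra ℚ α 0 β := ⟨0, 1, 0, 0⟩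
def jQ (α β : ℚ) : QuaternionAlgebra ℚ α 0 β := ⟨0, 0, 1, 0⟩
def kQ (α β : ℚ) : QuaternionAlgebra ℚ α 0 β := ⟨0, 0, 0, 1⟩

section iota

variable (hα : α < 0) (hβ : β < 0)
variable (ι : QuaternionAlgebra ℚ α 0 β →ₐ[ℚ] Quaternion ℝ)
variable (hι : ∀ x : QuaternionAlgebra ℚ α 0 β, ι (kSharp x) = kSharp (ι x))

lemma iota_coe (r : ℚ) : ι ((r : QuaternionAlgebra ℚ α 0 β)) = ((r : ℝ) : Quaternion ℝ) := by
  rw [show ((r : QuaternionAlgebra ℚ α 0 β)) = algebraMap ℚ (QuaternionAlgebra ℚ α 0 β) r from rfl,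
    AlgHom.commutes]
  rfl

include hα hβ hι in
lemma iota_re (x : QuaternionAlgebra ℚ α 0 β) : (ι x).re = x.re := by
  have hiQ : (ι (iQ α β)).re = 0 := by
    refine re_sq_real _ (α : ℝ) (by exact_mod_cast hα) ?_
    rw [← map_mul, show iQ α β * iQ α β = ((α : QuaternionAlgebra ℚ α 0 β)) from by
      ext <;> simp [iQ, QuaternionAlgebra.re_mul, QuaternionAlgebra.imI_mul,
        QuaternionAlgebra.imJ_mul, QuaternionAlgebra.imK_mul], iota_coe]
  have hjQ : (ι (jQ α β)).re = 0 := by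
    refine re_sq_real _ (β : ℝ) (by exact_mod_cast hβ) ?_
    rw [← map_mul, show jQ α β * jQ α β = ((β : QuaternionAlgebra ℚ α 0 β)) from by
      ext <;> simp [jQ, QuaternionAlgebra.re_mul, QuaternionAlgebra.imI_mul,
        QuaternionAlgebra.imJ_mul, QuaternionAlgebra.imK_mul], iota_coe]
  have hkQ : (ι (kQ α β)).re = 0 := by
    have h := hι (kQ α β)
    rw [show kSharp (kQ α β) = -(kQ α β) from by ext <;> simp [kQ, kSharp], map_neg] at h
    have := congrArg QuaternionAlgebra.re h
    simp only [sharpH_eq, sharpH_re, Quaternion.re_neg] at this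
    linarith
  have hdec : x = ((x.re : QuaternionAlgebra ℚ α 0 β))
      + x.imI • iQ α β + x.imJ • jQ α β + x.imK • kQ α β := by
    ext <;> simp [iQ, jQ, kQ]
  calc (ι x).re = (ι ((x.re : QuaternionAlgebra ℚ α 0 β))
      + x.imI • ι (iQ α β) + x.imJ • ι (jQ α β) + x.imK • ι (kQ α β)).re := by
        rw [← map_smul, ← map_smul, ← map_smul, ← map_add, ← map_add, ← map_add, ← hdec]
    _ = x.re := by
        rw [iota_coe]
        simp [hiQ, hjQ, hkQ]

include hα hβ hι in
lemma iota_star (x : QuaternionAlgebra ℚ α 0 β) : ι (star x) = star (ι x) := by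
  rw [QuaternionAlgebra.star_eq_two_re_sub, zero_mul, add_zero, map_sub, iota_coe,
    Quaternion.star_eq_two_re_sub, iota_re hα hβ ι hι]
  norm_cast

include hα hβ hι in
lemma iota_normSq (x : QuaternionAlgebra ℚ α 0 β) :
    Quaternion.normSq (ι x) = ((Nq x : ℚ) : ℝ) := by
  have h := congrArg ι (mul_star_self x)
  rw [map_mul, iota_star hα hβ ι hι, Quaternion.self_mul_star, iota_coe] at h
  exact Quaternion.coe_injective h

include hα hβ hι in
lemma iota_ne_zero {x : QuaternionAlgebra ℚ α 0 β} (hx : x ≠ 0) : ι x ≠ 0 := by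
  intro h
  have h2 := iota_normSq hα hβ ι hι x
  rw [h, map_zero] at h2
  have h3 : ((Nq x : ℚ) : ℝ) > 0 := by exact_mod_cast Nq_pos hα hβ hx
  linarith [h2.symm.le]

include hα hβ hι in
lemma iota_normSq_ge_one (O : Subring (QuaternionAlgebra ℚ α 0 β))
    (hOfg : O.toAddSubgroup.FG) {x : QuaternionAlgebra ℚ α 0 β}
    (hxO : x ∈ O) (hx : x ≠ 0) : 1 ≤ Quaternion.normSq (ι x) := by
  have hFG : (subalgebraOfSubring O : Subalgebra ℤ (QuaternionAlgebra ℚ α 0 β)).toSubmodule.FG := by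
    rw [Submodule.fg_iff_addSubgroup_fg]
    exact hOfg
  have hint : IsIntegral ℤ x := IsIntegral.of_mem_of_fg _ hFG x hxO
  obtain ⟨m, hm⟩ := Nq_int hα hβ x hint
  have hpos : 0 < Nq x := Nq_pos hα hβ hx
  have hm1 : 1 ≤ m := by
    have : (0 : ℚ) < (m : ℚ) := by rw [hm]; exact hpos
    have : 0 < m := by exact_mod_cast this
    omega
  rw [iota_normSq hα hβ ι hι]
  have : (1 : ℚ) ≤ Nq x := by rw [← hm]; exact_mod_cast hm1
  exact_mod_cast this

end iota
end

/-- for a `♯`-order `O` of a definite rational quaternion algebra and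
`M = [[a,b],[c,d]] ∈ SL^♯(2,O)`, for any `z ∈ ℍ` with `π_k(z) > 1` one has
`ι(c)·z + ι(d) ≠ 0` and `π_k(M.z) ≤ π_k(z)`, with equality iff `c = 0`. -/
theorem orbit_goes_down (α β : ℚ) (hα : α < 0) (hβ : β < 0)
    (O : Subring (QuaternionAlgebra ℚ α 0 β))
    (hOf : ∀ x ∈ O, kSharp x ∈ O)
    (hOfg : O.toAddSubgroup.FG)
    (hOspan : Submodule.span ℚ (O : Set (QuaternionAlgebra ℚ α 0 β)) = ⊤)
    (ι : QuaternionAlgebra ℚ α 0 β →ₐ[ℚ] Quaternion ℝ)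
    (hι : ∀ x : QuaternionAlgebra ℚ α 0 β, ι (kSharp x) = kSharp (ι x))
    (a b c d : QuaternionAlgebra ℚ α 0 β)
    (ha : a ∈ O) (hb : b ∈ O) (hc : c ∈ O) (hd : d ∈ O)
    (hM : !![a, b; c, d] * hatSigma kSharp !![a, b; c, d] = 1 ∧
          hatSigma kSharp !![a, b; c, d] * !![a, b; c, d] = 1) :
    ∀ z : Quaternion ℝ, 1 < z.imK →
      ι c * z + ι d ≠ 0 ∧
      ((ι a * z + ι b) * (ι c * z + ι d)⁻¹).imK ≤ z.imK ∧
      (((ι a * z + ι b) * (ι c * z + ι d)⁻¹).imK = z.imK ↔ c = 0) := by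
  intro z hz
  have r00 := Matrix.ext_iff.mpr hM.2 0 0
  have r01 := Matrix.ext_iff.mpr hM.2 0 1
  have r10 := Matrix.ext_iff.mpr hM.2 1 0
  have r11 := Matrix.ext_iff.mpr hM.2 1 1
  have s00 := Matrix.ext_iff.mpr hM.1 0 0
  have s10 := Matrix.ext_iff.mpr hM.1 1 0
  simp only [hatSigma, Matrix.mul_apply, Fin.sum_univ_two, Matrix.cons_val', Matrix.cons_val_zero,
    Matrix.cons_val_one, Matrix.head_cons, Matrix.empty_val', Matrix.cons_val_fin_one,
    Matrix.head_fin_const, Matrix.of_apply, Matrix.cons_val_fin_one, Matrix.one_apply_eq,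
    Matrix.one_apply_ne (by decide : (0 : Fin 2) ≠ 1), Matrix.one_apply_ne (by decide : (1 : Fin 2) ≠ 0),
    mul_neg, neg_mul] at r00 r01 r10 r11 s00 s10
  set A := ι a with hA
  set B := ι b with hB
  set C := ι c with hC
  set D := ι d with hD
  have H1 : sharpH D * A - sharpH B * C = 1 := by
    have := congrArg ι r00
    simp only [map_add, map_mul, map_neg, map_one, hι, ← sharpH_eq] at this
    rw [sub_eq_add_neg]
    exact this
  have H2 : sharpH D * B - sharpH B * D = 0 := by
    have := congrArg ι r01
    simp only [map_add, map_mul, map_neg, map_zero, hι, ← sharpH_eq] at this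
    rw [sub_eq_add_neg]
    exact this
  have H3 : -(sharpH C * A) + sharpH A * C = 0 := by
    have := congrArg ι r10
    simp only [map_add, map_mul, map_neg, map_zero, hι, ← sharpH_eq] at this
    exact this
  have H4 : -(sharpH C * B) + sharpH A * D = 1 := by
    have := congrArg ι r11
    simp only [map_add, map_mul, map_neg, map_one, hι, ← sharpH_eq] at this
    exact this
  by_cases hczero : c = 0
  · -- the stabilizing case : the height is preserved
    have hCz : C = 0 := by rw [hC, hczero, map_zero]
    have had : A * sharpH D = 1 := by
      rw [hczero, kSharpQ_zero, mul_zero, neg_zero, add_zero] at s00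
      have := congrArg ι s00
      simp only [map_mul, map_one, hι] at this
      exact this
    have hDne : D ≠ 0 := by
      intro h
      rw [h, sharpH_zero, mul_zero] at had
      exact zero_ne_one had
    have hane : a ≠ 0 := by
      intro h
      rw [h, map_zero] at hA
      rw [hA, zero_mul] at had
      exact zero_ne_one had
    have hdne : d ≠ 0 := by
      intro h
      rw [h, map_zero] at hD
      rw [hD, sharpH_zero, mul_zero] at had
      exact zero_ne_one had
    have hprod : Quaternion.normSq A * Quaternion.normSq D = 1 := by
      have := congrArg Quaternion.normSq had
      rwa [map_mul, map_one, normSq_sharpH] at this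
    have hnA : 1 ≤ Quaternion.normSq A := iota_normSq_ge_one hα hβ ι hι O hOfg ha hane
    have hnD : 1 ≤ Quaternion.normSq D := iota_normSq_ge_one hα hβ ι hι O hOfg hd hdne
    have hD1 : Quaternion.normSq D = 1 := by nlinarith only [hprod, hnA, hnD]
    have hvD : C * z + D = D := by rw [hCz, zero_mul, zero_add]
    have htrans := imK_transform A B C D z H1 H2 H3 H4 (by rw [hvD]; exact hDne)
    rw [hvD, hD1, mul_one] at htrans
    refine ⟨by rw [hvD]; exact hDne, ?_, ?_⟩
    · rw [hvD]
      exact le_of_eq htrans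
    · rw [hvD]
      exact ⟨fun _ => hczero, fun _ => htrans⟩
  · -- the strict case : the height goes down
    have hCne : C ≠ 0 := iota_ne_zero hα hβ ι hι hczero
    have hsCne : sharpH C ≠ 0 := fun h => hCne (sharpH_eq_zero h)
    have hCD : C * sharpH D = D * sharpH C := by
      have h0 := congrArg ι s10
      simp only [map_add, map_mul, map_neg, map_zero, hι] at h0
      have h1 : C * sharpH D + -(D * sharpH C) = 0 := h0
      rw [← sub_eq_add_neg] at h1
      exact sub_eq_zero.mp h1
    set w := C⁻¹ * D with hw
    have hwk : w.imK = 0 := by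
      refine imK_eq_zero_of_sharpH_eq _ ?_
      rw [hw, sharpH_mul, sharpH_inv]
      calc sharpH D * (sharpH C)⁻¹
          = C⁻¹ * (C * sharpH D) * (sharpH C)⁻¹ := by
            rw [← mul_assoc, inv_mul_cancel₀ hCne, one_mul]
        _ = C⁻¹ * D * (sharpH C * (sharpH C)⁻¹) := by rw [hCD]; noncomm_ring
        _ = C⁻¹ * D := by rw [mul_inv_cancel₀ hsCne, mul_one]
    have hvfac : C * z + D = C * (z + w) := by
      rw [mul_add, hw, ← mul_assoc, mul_inv_cancel₀ hCne, one_mul]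
    have hnormv : Quaternion.normSq (C * z + D)
        = Quaternion.normSq C * Quaternion.normSq (z + w) := by rw [hvfac, map_mul]
    have hzw : z.imK ^ 2 ≤ Quaternion.normSq (z + w) := by
      have h1 := normSq_ge_imK_sq (z + w)
      rwa [Quaternion.imK_add, hwk, add_zero] at h1
    have hnC : 1 ≤ Quaternion.normSq C := iota_normSq_ge_one hα hβ ι hι O hOfg hc hczero
    have hzw1 : (1 : ℝ) < z.imK ^ 2 := by nlinarith only [hz]
    have hpos : (0 : ℝ) < Quaternion.normSq (z + w) := by linarith only [hzw, hzw1]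
    have hnv : 1 < Quaternion.normSq (C * z + D) := by
      rw [hnormv]
      calc (1 : ℝ) < z.imK ^ 2 := hzw1
        _ ≤ Quaternion.normSq (z + w) := hzw
        _ ≤ Quaternion.normSq C * Quaternion.normSq (z + w) :=
            le_mul_of_one_le_left (le_of_lt hpos) hnC
    have hvne : C * z + D ≠ 0 := by
      intro h
      rw [h, map_zero] at hnv
      linarith
    have htrans := imK_transform A B C D z H1 H2 H3 H4 hvne
    set t := ((A * z + B) * (C * z + D)⁻¹).imK with ht
    set nv := Quaternion.normSq (C * z + D) with hnvdef
    have htpos : 0 < t := by nlinarith only [htrans, hnv, hz]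
    have hlt : t < z.imK := by nlinarith only [htrans, hnv, htpos]
    exact ⟨hvne, le_of_lt hlt, ⟨fun h => absurd h (ne_of_lt hlt), fun h => absurd h hczero⟩⟩
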